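/- There is no function f : ℕ → (0,∞) such that LowerCalDist(x,p) ≥ f(T)·CalDist(x,p) holds for all T, all x ∈ {0,1}^T, and all p ∈ [0,1]^T. -/

import Mathlib

set_option maxHeartbeats 1600000

lemma pair_support (a b c d : ℝ) (hab : a ≠ b) (hc : c ≠ 0) (hd : d ≠ 0) :
    (Finsupp.single a c + Finsupp.single b d).support = {a, b} := by
  have hdisj : Disjoint (Finsupp.single a c).support (Finsupp.single b d).support := by
    rw [Finsupp.support_single_ne_zero _ hc, Finsupp.support_single_ne_zero _ hd]
    simp [hab, Ne.symm hab]
  rw [Finsupp.support_add_eq hdisj, Finsupp.support_single_ne_zero _ hc,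
    Finsupp.support_single_ne_zero _ hd]
  rfl

lemma perpoint (u : ℝ) (hu0 : 0 < u) (hu12 : u ≤ 1/12) (q : Fin 4 → ℝ)
    (hq : ∀ α : ℝ, ∑ t, ((![0,1,1,0] : Fin 4 → ℝ) t - q t) * (if q t = α then 1 else 0) = 0)
    (t₀ : Fin 4) :
    u ≤ |(![1/2-u,1/2-u,1/2+u,1/2+u] : Fin 4 → ℝ) t₀ - q t₀| := by
  fin_cases t₀
  · have h := hq (q 0)
    rw [Fin.sum_univ_four] at h
    by_cases h1 : q 1 = q 0 <;> by_cases h2 : q 2 = q 0 <;> by_cases h3 : q 3 = q 0 <;>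
      simp [h1, h2, h3] at h ⊢ <;> rw [le_abs] <;>
      first | (left; linarith) | (right; linarith)
  · have h := hq (q 1)
    rw [Fin.sum_univ_four] at h
    by_cases h1 : q 0 = q 1 <;> by_cases h2 : q 2 = q 1 <;> by_cases h3 : q 3 = q 1 <;>
      simp [h1, h2, h3] at h ⊢ <;> rw [le_abs] <;>
      first | (left; linarith) | (right; linarith)
  · have h := hq (q 2)
    rw [Fin.sum_univ_four] at h
    by_cases h1 : q 0 = q 2 <;> by_cases h2 : q 1 = q 2 <;> by_cases h3 : q 3 = q 2 <;>
      simp [h1, h2, h3] at h ⊢ <;> rw [le_abs] <;>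
      first | (left; linarith) | (right; linarith)
  · have h := hq (q 3)
    rw [Fin.sum_univ_four] at h
    by_cases h1 : q 0 = q 3 <;> by_cases h2 : q 1 = q 3 <;> by_cases h3 : q 2 = q 3 <;>
      simp [h1, h2, h3] at h ⊢ <;> rw [le_abs] <;>
      first | (left; linarith) | (right; linarith)

/-- No multiplicative approximation: there is no f : ℕ → (0,∞) with
LowerCalDist(x,p) ≥ f(T)·CalDist(x,p) for all T, x ∈ {0,1}^T, p ∈ [0,1]^T. -/
theorem no_multiplicative_approx :
    ¬ ∃ f : ℕ → ℝ, (∀ T, 0 < f T) ∧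
      ∀ (T : ℕ) (x p : Fin T → ℝ), (∀ t, x t = 0 ∨ x t = 1) →
        (∀ t, p t ∈ Set.Icc (0:ℝ) 1) →
        f T * sInf {d : ℝ | ∃ q : Fin T → ℝ, (∀ t, q t ∈ Set.Icc (0:ℝ) 1) ∧
            (∀ α : ℝ, ∑ t, (x t - q t) * (if q t = α then 1 else 0) = 0) ∧
            d = ∑ t, |p t - q t|} ≤
          sInf {c : ℝ | ∃ D : Fin T → (ℝ →₀ ℝ),
            (∀ t a, 0 ≤ D t a) ∧
            (∀ t, ∀ a ∈ (D t).support, a ∈ Set.Icc (0:ℝ) 1) ∧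
            (∀ t, ∑ a ∈ (D t).support, D t a = 1) ∧
            (∀ α : ℝ, ∑ t, (x t - α) * D t α = 0) ∧
            c = ∑ t, ∑ a ∈ (D t).support, D t a * |p t - a|} := by
  rintro ⟨f, hfpos, hf⟩
  have hF0 : 0 < f 4 := hfpos 4
  obtain ⟨u, hu0, hu12, huF⟩ : ∃ u : ℝ, 0 < u ∧ u ≤ 1/12 ∧ u ≤ f 4 / 3 :=
    ⟨min (1/12) (f 4 / 3), lt_min (by norm_num) (by positivity),
      min_le_left _ _, min_le_right _ _⟩
  set x : Fin 4 → ℝ := ![0,1,1,0] with hxdef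
  set p : Fin 4 → ℝ := ![1/2-u, 1/2-u, 1/2+u, 1/2+u] with hpdef
  have hx : ∀ t, x t = 0 ∨ x t = 1 := by
    intro t; fin_cases t <;> simp [hxdef]
  have hp : ∀ t, p t ∈ Set.Icc (0:ℝ) 1 := by
    intro t; fin_cases t <;> exact ⟨by norm_num [hpdef]; linarith, by norm_num [hpdef]; linarith⟩
  have key := hf 4 x p hx hp
  -- the value m and its properties
  have hden : (0:ℝ) < 1/2 + u := by linarith
  obtain ⟨m, hm, hm0, hm1⟩ : ∃ m : ℝ, (1/2 + u) * m = 1/2 - u ∧ 0 < m ∧ m < 1 :=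
    ⟨(1/2 - u)/(1/2 + u), by field_simp, div_pos (by linarith) hden,
      (div_lt_one hden).2 (by linarith)⟩
  -- Lower bound on sInf of the first set
  have hA : 4*u ≤ sInf {d : ℝ | ∃ q : Fin 4 → ℝ, (∀ t, q t ∈ Set.Icc (0:ℝ) 1) ∧
      (∀ α : ℝ, ∑ t, (x t - q t) * (if q t = α then 1 else 0) = 0) ∧
      d = ∑ t, |p t - q t|} := by
    apply le_csInf
    · refine ⟨∑ t, |p t - x t|, x, ?_, ?_, rfl⟩
      · intro t; rcases hx t with h'|h' <;> rw [h'] <;> exact ⟨by norm_num, by norm_num⟩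
      · intro α; simp
    · rintro d ⟨q, hq1, hq2, rfl⟩
      have h0 := perpoint u hu0 hu12 q (by rw [hxdef] at hq2; exact hq2) 0
      have h1 := perpoint u hu0 hu12 q (by rw [hxdef] at hq2; exact hq2) 1
      have h2 := perpoint u hu0 hu12 q (by rw [hxdef] at hq2; exact hq2) 2
      have h3 := perpoint u hu0 hu12 q (by rw [hxdef] at hq2; exact hq2) 3
      rw [Fin.sum_univ_four]
      simp only [hpdef, Matrix.cons_val_zero, Matrix.cons_val_one, Matrix.head_cons,
        Matrix.cons_val_two, Matrix.tail_cons, Matrix.cons_val_three] at h0 h1 h2 h3 ⊢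
      linarith
  -- Upper bound on sInf of the second set via explicit witness
  have hmne : m ≠ 0 := ne_of_gt hm0
  have h1mne : 1 - m ≠ 0 := by linarith
  have hne1 : (1/2 - u : ℝ) ≠ 1/2 := by intro h; linarith [hu0]
  have hne2 : (1/2 + u : ℝ) ≠ 1/2 := by intro h; linarith [hu0]
  have habs1 : |1/2 - u - (1/2:ℝ)| = u := by
    rw [show 1/2 - u - (1/2:ℝ) = -u by ring, abs_neg, abs_of_pos hu0]
  have habs2 : |1/2 + u - (1/2:ℝ)| = u := by
    rw [show 1/2 + u - (1/2:ℝ) = u by ring, abs_of_pos hu0]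
  set D : Fin 4 → (ℝ →₀ ℝ) :=
    ![Finsupp.single (1/2 - u) 1,
      Finsupp.single (1/2 - u) m + Finsupp.single (1/2 : ℝ) (1 - m),
      Finsupp.single (1/2 + u) 1,
      Finsupp.single (1/2 + u) m + Finsupp.single (1/2 : ℝ) (1 - m)] with hDdef
  have hD0e : D 0 = Finsupp.single (1/2 - u) 1 := by
    rw [hDdef]; simp only [Matrix.cons_val_zero, Matrix.cons_val_one, Matrix.head_cons, Matrix.cons_val_two, Matrix.tail_cons, Matrix.cons_val_three]
  have hD1e : D 1 = Finsupp.single (1/2 - u) m + Finsupp.single (1/2 : ℝ) (1 - m) := by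
    rw [hDdef]; simp only [Matrix.cons_val_zero, Matrix.cons_val_one, Matrix.head_cons, Matrix.cons_val_two, Matrix.tail_cons, Matrix.cons_val_three]
  have hD2e : D 2 = Finsupp.single (1/2 + u) 1 := by
    rw [hDdef]; simp only [Matrix.cons_val_zero, Matrix.cons_val_one, Matrix.head_cons, Matrix.cons_val_two, Matrix.tail_cons, Matrix.cons_val_three]
  have hD3e : D 3 = Finsupp.single (1/2 + u) m + Finsupp.single (1/2 : ℝ) (1 - m) := by
    rw [hDdef]; simp only [Matrix.cons_val_zero, Matrix.cons_val_one, Matrix.head_cons, Matrix.cons_val_two, Matrix.tail_cons, Matrix.cons_val_three]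
  have hsupp0 : (D 0).support = {(1/2 - u : ℝ)} := by
    rw [hD0e]; exact Finsupp.support_single_ne_zero _ one_ne_zero
  have hsupp1 : (D 1).support = {1/2 - u, (1/2:ℝ)} := by
    rw [hD1e]; exact pair_support _ _ _ _ hne1 hmne h1mne
  have hsupp2 : (D 2).support = {(1/2 + u : ℝ)} := by
    rw [hD2e]; exact Finsupp.support_single_ne_zero _ one_ne_zero
  have hsupp3 : (D 3).support = {1/2 + u, (1/2:ℝ)} := by
    rw [hD3e]; exact pair_support _ _ _ _ hne2 hmne h1mne
  -- componentwise nonnegativity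
  have hg0 : ∀ a, 0 ≤ D 0 a := by
    intro a; rw [hD0e, Finsupp.single_apply]; split_ifs <;> norm_num
  have hg1 : ∀ a, 0 ≤ D 1 a := by
    intro a; rw [hD1e, Finsupp.add_apply, Finsupp.single_apply, Finsupp.single_apply]
    split_ifs <;> simp <;> linarith
  have hg2 : ∀ a, 0 ≤ D 2 a := by
    intro a; rw [hD2e, Finsupp.single_apply]; split_ifs <;> norm_num
  have hg3 : ∀ a, 0 ≤ D 3 a := by
    intro a; rw [hD3e, Finsupp.add_apply, Finsupp.single_apply, Finsupp.single_apply]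
    split_ifs <;> simp <;> linarith
  -- componentwise sums
  have hs0 : ∑ a ∈ (D 0).support, D 0 a = 1 := by
    rw [hsupp0, Finset.sum_singleton, hD0e, Finsupp.single_apply, if_pos rfl]
  have hs1 : ∑ a ∈ (D 1).support, D 1 a = 1 := by
    rw [hsupp1, Finset.sum_pair hne1, hD1e, Finsupp.add_apply, Finsupp.add_apply,
      Finsupp.single_apply, Finsupp.single_apply, Finsupp.single_apply, Finsupp.single_apply,
      if_pos rfl, if_pos rfl, if_neg hne1, if_neg (Ne.symm hne1)]
    ring
  have hs2 : ∑ a ∈ (D 2).support, D 2 a = 1 := by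
    rw [hsupp2, Finset.sum_singleton, hD2e, Finsupp.single_apply, if_pos rfl]
  have hs3 : ∑ a ∈ (D 3).support, D 3 a = 1 := by
    rw [hsupp3, Finset.sum_pair hne2, hD3e, Finsupp.add_apply, Finsupp.add_apply,
      Finsupp.single_apply, Finsupp.single_apply, Finsupp.single_apply, Finsupp.single_apply,
      if_pos rfl, if_pos rfl, if_neg hne2, if_neg (Ne.symm hne2)]
    ring
  have hI0 : ∀ a ∈ (D 0).support, a ∈ Set.Icc (0:ℝ) 1 := by
    rw [hsupp0]; intro a ha; simp only [Finset.mem_singleton] at ha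
    subst ha; exact ⟨by linarith, by linarith⟩
  have hI1 : ∀ a ∈ (D 1).support, a ∈ Set.Icc (0:ℝ) 1 := by
    rw [hsupp1]; intro a ha; simp only [Finset.mem_insert, Finset.mem_singleton] at ha
    rcases ha with rfl | rfl <;> exact ⟨by linarith, by linarith⟩
  have hI2 : ∀ a ∈ (D 2).support, a ∈ Set.Icc (0:ℝ) 1 := by
    rw [hsupp2]; intro a ha; simp only [Finset.mem_singleton] at ha
    subst ha; exact ⟨by linarith, by linarith⟩
  have hI3 : ∀ a ∈ (D 3).support, a ∈ Set.Icc (0:ℝ) 1 := by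
    rw [hsupp3]; intro a ha; simp only [Finset.mem_insert, Finset.mem_singleton] at ha
    rcases ha with rfl | rfl <;> exact ⟨by linarith, by linarith⟩
  have hB : sInf {c : ℝ | ∃ D : Fin 4 → (ℝ →₀ ℝ),
      (∀ t a, 0 ≤ D t a) ∧
      (∀ t, ∀ a ∈ (D t).support, a ∈ Set.Icc (0:ℝ) 1) ∧
      (∀ t, ∑ a ∈ (D t).support, D t a = 1) ∧
      (∀ α : ℝ, ∑ t, (x t - α) * D t α = 0) ∧
      c = ∑ t, ∑ a ∈ (D t).support, D t a * |p t - a|} ≤ (1-m)*u + (1-m)*u := by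
    apply csInf_le
    · refine ⟨0, ?_⟩
      rintro c ⟨E, hE0, _, _, _, rfl⟩
      exact Finset.sum_nonneg fun t _ => Finset.sum_nonneg fun a _ =>
        mul_nonneg (hE0 t a) (abs_nonneg _)
    · refine ⟨D, ?_, ?_, ?_, ?_, ?_⟩
      · intro t a
        fin_cases t
        · exact hg0 a
        · exact hg1 a
        · exact hg2 a
        · exact hg3 a
      · intro t a ha
        fin_cases t
        · exact hI0 a ha
        · exact hI1 a ha
        · exact hI2 a ha
        · exact hI3 a ha
      · intro t
        fin_cases t
        · exact hs0
        · exact hs1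
        · exact hs2
        · exact hs3
      · intro α
        rw [Fin.sum_univ_four, hD0e, hD1e, hD2e, hD3e]
        simp only [hxdef, Matrix.cons_val_zero, Matrix.cons_val_one, Matrix.head_cons, Matrix.cons_val_two, Matrix.tail_cons, Matrix.cons_val_three,
          Finsupp.add_apply, Finsupp.single_apply]
        split_ifs
        · exfalso; linarith
        · exfalso; linarith
        · exfalso; linarith
        · subst_vars; linear_combination hm
        · exfalso; linarith
        · subst_vars; ring
        · subst_vars; linear_combination -hm
        · ring
      · have hc0 : ∑ a ∈ (D 0).support, D 0 a * |(1/2 - u) - a| = 0 := by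
          rw [hsupp0, Finset.sum_singleton, hD0e, Finsupp.single_apply, if_pos rfl,
            sub_self, abs_zero, mul_zero]
        have hc2 : ∑ a ∈ (D 2).support, D 2 a * |(1/2 + u) - a| = 0 := by
          rw [hsupp2, Finset.sum_singleton, hD2e, Finsupp.single_apply, if_pos rfl,
            sub_self, abs_zero, mul_zero]
        have hc1 : ∑ a ∈ (D 1).support, D 1 a * |(1/2 - u) - a| = (1-m)*u := by
          rw [hsupp1, Finset.sum_pair hne1, hD1e, Finsupp.add_apply, Finsupp.add_apply,
            Finsupp.single_apply, Finsupp.single_apply, Finsupp.single_apply,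
            Finsupp.single_apply, if_pos rfl, if_pos rfl, if_neg hne1, if_neg (Ne.symm hne1),
            sub_self, abs_zero, habs1]
          ring
        have hc3 : ∑ a ∈ (D 3).support, D 3 a * |(1/2 + u) - a| = (1-m)*u := by
          rw [hsupp3, Finset.sum_pair hne2, hD3e, Finsupp.add_apply, Finsupp.add_apply,
            Finsupp.single_apply, Finsupp.single_apply, Finsupp.single_apply,
            Finsupp.single_apply, if_pos rfl, if_pos rfl, if_neg hne2, if_neg (Ne.symm hne2),
            sub_self, abs_zero, habs2]
          ring
        rw [Fin.sum_univ_four]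
        simp only [hpdef, Matrix.cons_val_zero, Matrix.cons_val_one, Matrix.head_cons,
          Matrix.cons_val_two, Matrix.tail_cons, Matrix.cons_val_three]
        rw [hc0, hc1, hc2, hc3]
        ring
  -- conclude
  have hchain : f 4 * (4*u) ≤ (1-m)*u + (1-m)*u :=
    (mul_le_mul_of_nonneg_left hA hF0.le).trans (key.trans hB)
  have h2u : (1/2 + u) * (1 - m) = 2*u := by linear_combination -hm
  have h1m4u : 1 - m ≤ 4*u := by nlinarith [h2u, hm1]
  have hsq : f 4 * (4*u) ≤ 8*(u*u) := by nlinarith [h1m4u, hu0]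
  nlinarith [hsq, huF, hu0, hF0, mul_pos hF0 hu0]
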